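/- Let N be a nest on a Hilbert space H containing a strictly decreasing sequence of subspaces N₀ > N₁ > N₂ > ⋯. Then the right topological stable rank of the nest algebra T(N) is infinite. -/

import Mathlib

/-- `n`-tuples generating `A` as a left ideal. -/
noncomputable def Lg (A : Type*) [NormedRing A] (n : ℕ) : Set (Fin n → A) :=
  {a | ∃ b : Fin n → A, ∑ i, b i * a i = 1}

/-- `n`-tuples generating `A` as a right ideal. -/
noncomputable def Rg (A : Type*) [NormedRing A] (n : ℕ) : Set (Fin n → A) :=
  {a | ∃ b : Fin n → A, ∑ i, a i * b i = 1}

/-- The left topological stable rank. -/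
noncomputable def ltsr (A : Type*) [NormedRing A] : ℕ∞ :=
  sInf {N : ℕ∞ | ∃ n : ℕ, N = n ∧ Dense (Lg A n)}

/-- The right topological stable rank. -/
noncomputable def rtsr (A : Type*) [NormedRing A] : ℕ∞ :=
  sInf {N : ℕ∞ | ∃ n : ℕ, N = n ∧ Dense (Rg A n)}


/-- A nest: a chain of closed subspaces containing `{0}` and `H`, closed under
intersections and closed linear spans. -/
structure IsNest {H : Type*} [NormedAddCommGroup H] [InnerProductSpace ℂ H]
    (𝒩 : Set (Submodule ℂ H)) : Prop where
  isClosed : ∀ N ∈ 𝒩, IsClosed (N : Set H)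
  isChain : IsChain (· ≤ ·) 𝒩
  bot_mem : ⊥ ∈ 𝒩
  top_mem : ⊤ ∈ 𝒩
  sInf_mem : ∀ S ⊆ 𝒩, S.Nonempty → sInf S ∈ 𝒩
  span_mem : ∀ S ⊆ 𝒩, S.Nonempty → (sSup S).topologicalClosure ∈ 𝒩

/-- The nest algebra of all bounded operators leaving every subspace of `𝒩` invariant. -/
noncomputable def nestAlgebra {H : Type*} [NormedAddCommGroup H] [InnerProductSpace ℂ H]
    (𝒩 : Set (Submodule ℂ H)) : Subalgebra ℂ (H →L[ℂ] H) where
  carrier := {T | ∀ N ∈ 𝒩, ∀ x ∈ N, T x ∈ N}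
  mul_mem' := fun hT hS N hN x hx => hT N hN _ (hS N hN x hx)
  add_mem' := fun hT hS N hN x hx => N.add_mem (hT N hN x hx) (hS N hN x hx)
  algebraMap_mem' := fun c N hN x hx => by
    simpa [Algebra.algebraMap_eq_smul_one] using N.smul_mem c hx

section Aux

/-- A `1`-separated subset of a separable metric space is countable. -/
lemma aux_countable_of_one_le_dist {α : Type*} [MetricSpace α]
    [TopologicalSpace.SeparableSpace α] {w : Set α}
    (h : ∀ x ∈ w, ∀ y ∈ w, x ≠ y → 1 ≤ dist x y) : w.Countable := by
  obtain ⟨t, hts, htc, hst⟩ :=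
    (TopologicalSpace.IsSeparable.of_separableSpace w).exists_countable_dense_subset
  refine htc.mono ?_
  intro x hx
  obtain ⟨y, hyt, hxy⟩ := Metric.mem_closure_iff.1 (hst hx) (1/2) (by norm_num)
  by_cases hxy' : x = y
  · exact hxy' ▸ hyt
  · exact absurd hxy (by have := h x hx y (hts hyt) hxy'; linarith)

variable {H : Type*} [NormedAddCommGroup H] [InnerProductSpace ℂ H]

lemma aux_orthonormal_dist {x y : H} (hx : ‖x‖ = 1) (hy : ‖y‖ = 1)
    (hxy : (inner ℂ x y : ℂ) = 0) : 1 ≤ dist x y := by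
  have h2 : dist x y ^ 2 = 2 := by
    rw [dist_eq_norm, norm_sub_sq (𝕜 := ℂ), hx, hy, hxy]
    norm_num
  nlinarith [dist_nonneg (x := x) (y := y)]

lemma aux_norm_sum_sq {n : ℕ} (z : Fin n → H)
    (h : ∀ i j, i ≠ j → (inner ℂ (z i) (z j) : ℂ) = 0) :
    ‖∑ i, z i‖ ^ 2 = ∑ i, ‖z i‖ ^ 2 := by
  have h1 : (inner ℂ (∑ i, z i) (∑ j, z j) : ℂ) = ∑ i, (inner ℂ (z i) (z i) : ℂ) := by
    rw [sum_inner]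
    refine Finset.sum_congr rfl fun i _ => ?_
    rw [inner_sum]
    rw [Finset.sum_eq_single i]
    · intro j _ hji
      exact h i j (Ne.symm hji)
    · intro hi; exact absurd (Finset.mem_univ i) hi
  rw [← inner_self_eq_norm_sq (𝕜 := ℂ), h1, map_sum]
  exact Finset.sum_congr rfl fun i _ => inner_self_eq_norm_sq (z i)

lemma aux_final (n : ℕ) (ε s : ℝ) (hεdef : ε = (2 * ((n : ℝ) + 1))⁻¹)
    (h1s : 1 ≤ ε * s) (hfin : s ^ 2 ≤ (n : ℝ) * (ε * s) ^ 2) : False := by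
  have hεpos : 0 < ε := by rw [hεdef]; positivity
  have hspos : 0 < s := by nlinarith
  have hcontra : (1 : ℝ) ≤ (n : ℝ) * ε ^ 2 := by
    nlinarith [hfin, hspos, mul_pos hspos hspos]
  have hinv : (2 * ((n : ℝ) + 1)) * ε = 1 := by
    rw [hεdef]; field_simp
  have hc2 : (2 * ((n : ℝ) + 1)) ^ 2 * ε ^ 2 = 1 := by
    rw [← mul_pow, hinv, one_pow]
  have hc3 : (2 * ((n : ℝ) + 1)) ^ 2 ≤ (n : ℝ) := by
    nlinarith [hcontra, hc2, sq_nonneg (2 * ((n : ℝ) + 1))]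
  nlinarith [Nat.cast_nonneg (α := ℝ) n, hc3]

end Aux

set_option maxHeartbeats 1000000 in
/-- If a nest contains a strictly decreasing sequence of subspaces, the right topological
stable rank of its nest algebra is infinite. -/
theorem stmt14 {H : Type*} [NormedAddCommGroup H] [InnerProductSpace ℂ H] [CompleteSpace H]
    [TopologicalSpace.SeparableSpace H]
    (𝒩 : Set (Submodule ℂ H)) (h𝒩 : IsNest 𝒩)
    (N : ℕ → Submodule ℂ H) (hmem : ∀ k, N k ∈ 𝒩) (hanti : StrictAnti N) :
    rtsr (nestAlgebra 𝒩) = ⊤ := by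
  classical
  have key : ∀ n : ℕ, ¬ Dense (Rg (nestAlgebra 𝒩) n) := by
    intro n hDense
    -- ## Setup
    have hNcl : ∀ k, IsClosed ((N k : Set H)) := fun k => h𝒩.isClosed _ (hmem k)
    have hNmono : ∀ {j k : ℕ}, j ≤ k → N k ≤ N j := fun {j k} h => hanti.antitone h
    set Ninf : Submodule ℂ H := ⨅ k, N k with hNinfdef
    have hNinfle : ∀ k, Ninf ≤ N k := fun k => iInf_le N k
    have hNinfcl : IsClosed ((Ninf : Set H)) := by
      rw [hNinfdef, Submodule.coe_iInf]
      exact isClosed_iInter fun k => hNcl k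
    set K : Submodule ℂ H := N 0 ⊓ Ninfᗮ with hKdef
    have hKcl : IsClosed ((K : Set H)) := by
      rw [hKdef, Submodule.coe_inf]
      exact (hNcl 0).inter (Submodule.isClosed_orthogonal _)
    haveI : CompleteSpace ↥K := hKcl.completeSpace_coe
    haveI : CompleteSpace ↥Ninf := hNinfcl.completeSpace_coe
    have hNinfKbot : Ninf ≤ Kᗮ := by
      intro u hu
      rw [Submodule.mem_orthogonal]
      intro y hy
      exact ((Submodule.mem_orthogonal' _ _).1 ((Submodule.mem_inf.1 hy).2)) u hu
    -- ## The orthonormal vectors e k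
    have hDexists : ∀ k : ℕ, ∃ x : H,
        (x ∈ N k ∧ x ∈ (N (k+1))ᗮ) ∧ ‖x‖ = 1 := by
      intro k
      obtain ⟨x, hxk, hxk1⟩ := SetLike.exists_of_lt (hanti (lt_add_one k))
      haveI : CompleteSpace ↥(N (k+1)) := (hNcl (k+1)).completeSpace_coe
      set d := x - (Submodule.orthogonalProjectionOnto (N (k+1)) x : H) with hd
      have hdne : d ≠ 0 := by
        intro h0
        apply hxk1
        have hxeq : x = (Submodule.orthogonalProjectionOnto (N (k+1)) x : H) := by
          rwa [sub_eq_zero] at h0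
        rw [hxeq]; exact SetLike.coe_mem _
      refine ⟨(↑‖d‖)⁻¹ • d, ⟨?_, ?_⟩, norm_smul_inv_norm hdne⟩
      · exact Submodule.smul_mem _ _ (Submodule.sub_mem _ hxk
          (hNmono (Nat.le_succ k) (SetLike.coe_mem _)))
      · exact Submodule.smul_mem _ _ (Submodule.sub_starProjection_mem_orthogonal x)
    choose e heD heno using hDexists
    have heD1 : ∀ k, e k ∈ N k := fun k => (heD k).1
    have heD2 : ∀ k, e k ∈ (N (k+1))ᗮ := fun k => (heD k).2
    have he : Orthonormal ℂ e := by
      rw [orthonormal_iff_ite]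
      intro j k
      by_cases hjk : j = k
      · subst hjk
        simp only [if_pos rfl]
        rw [inner_self_eq_norm_sq_to_K, heno j]
        norm_num
      · rw [if_neg hjk]
        rcases lt_or_gt_of_ne hjk with h | h
        · exact ((Submodule.mem_orthogonal' _ _).1 (heD2 j)) _ (hNmono h (heD1 k))
        · exact ((Submodule.mem_orthogonal _ _).1 (heD2 k)) _ (hNmono h (heD1 j))
    -- ## Hilbert bases of the atoms D k = N k ⊓ (N (k+1))ᗮ
    have hDkcl : ∀ k, IsClosed (((N k ⊓ (N (k+1))ᗮ) : Submodule ℂ H) : Set H) := fun k => by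
      rw [Submodule.coe_inf]
      exact (hNcl k).inter (Submodule.isClosed_orthogonal _)
    haveI : SecondCountableTopology H := UniformSpace.secondCountable_of_separable H
    have hbasis : ∀ k : ℕ, ∃ w : Set ↥(N k ⊓ (N (k+1))ᗮ), w.Countable ∧
        ∃ b : HilbertBasis w ℂ ↥(N k ⊓ (N (k+1))ᗮ), ⇑b = ((↑) : w → ↥(N k ⊓ (N (k+1))ᗮ)) := by
      intro k
      haveI : CompleteSpace ↥(N k ⊓ (N (k+1))ᗮ) := (hDkcl k).completeSpace_coe
      obtain ⟨w, b, hb⟩ := exists_hilbertBasis ℂ ↥(N k ⊓ (N (k+1))ᗮ)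
      have hON : Orthonormal ℂ ((↑) : w → ↥(N k ⊓ (N (k+1))ᗮ)) := hb ▸ b.orthonormal
      refine ⟨w, ?_, b, hb⟩
      apply aux_countable_of_one_le_dist
      intro x hx y hy hxy
      have hne : (⟨x, hx⟩ : w) ≠ ⟨y, hy⟩ := fun hcon => hxy (congrArg Subtype.val hcon)
      exact aux_orthonormal_dist (hON.1 ⟨x, hx⟩) (hON.1 ⟨y, hy⟩) (hON.2 hne)
    choose w hwc bB hbB using hbasis
    haveI hwC : ∀ k : ℕ, Countable ↥(w k) := fun k => (hwc k).to_subtype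
    -- index type
    set ι := (k : ℕ) × ↥(w k) with hι
    obtain ⟨enc, henc⟩ := exists_injective_nat ι
    -- the orthonormal family in H
    have hgmem : ∀ j : ι, ((j.2 : ↥(N j.1 ⊓ (N (j.1+1))ᗮ)) : H) ∈ N j.1 ∧
        ((j.2 : ↥(N j.1 ⊓ (N (j.1+1))ᗮ)) : H) ∈ (N (j.1+1))ᗮ := fun j =>
      Submodule.mem_inf.1 (SetLike.coe_mem (j.2 : ↥(N j.1 ⊓ (N (j.1+1))ᗮ)))
    set g : ι → H := fun j => ((j.2 : ↥(N j.1 ⊓ (N (j.1+1))ᗮ)) : H) with hg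
    have hgK : ∀ j : ι, g j ∈ K := by
      intro j
      refine Submodule.mem_inf.2 ⟨hNmono (Nat.zero_le _) (hgmem j).1, ?_⟩
      exact Submodule.orthogonal_le (hNinfle (j.1+1)) (hgmem j).2
    set gK : ι → ↥K := fun j => (⟨g j, hgK j⟩ : ↥K) with hgK2
    -- orthonormality of gK
    have hONw : ∀ k, Orthonormal ℂ ((↑) : w k → ↥(N k ⊓ (N (k+1))ᗮ)) :=
      fun k => hbB k ▸ (bB k).orthonormal
    have hONgK : Orthonormal ℂ gK := by
      rw [orthonormal_iff_ite]
      rintro ⟨k, s⟩ ⟨k', s'⟩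
      rw [Submodule.coe_inner]
      by_cases hkk : k = k'
      · subst hkk
        by_cases hss : s = s'
        · subst hss
          rw [if_pos rfl]
          have := (hONw k).1 s
          have hn : ‖g ⟨k, s⟩‖ = 1 := by
            rw [hg]; rw [← Submodule.coe_norm]; exact this
          rw [inner_self_eq_norm_sq_to_K, hn]; norm_num
        · have hne : (⟨k, s⟩ : ι) ≠ ⟨k, s'⟩ := by
            intro hcon; exact hss (by
              have := Sigma.mk.inj_iff.1 hcon
              exact eq_of_heq this.2)
          rw [if_neg hne]
          have h0 : (inner ℂ (s : ↥(N k ⊓ (N (k+1))ᗮ)) (s' : ↥(N k ⊓ (N (k+1))ᗮ)) : ℂ) = 0 :=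
            (hONw k).2 (fun hcon => hss hcon)
          rw [Submodule.coe_inner] at h0
          exact h0
      · have hne : (⟨k, s⟩ : ι) ≠ ⟨k', s'⟩ := by
          intro hcon; exact hkk (Sigma.mk.inj_iff.1 hcon).1
        rw [if_neg hne]
        rcases lt_or_gt_of_ne hkk with h | h
        · exact ((Submodule.mem_orthogonal' _ _).1 (hgmem ⟨k, s⟩).2) _
            (hNmono h (hgmem ⟨k', s'⟩).1)
        · exact ((Submodule.mem_orthogonal _ _).1 (hgmem ⟨k', s'⟩).2) _
            (hNmono h (hgmem ⟨k, s⟩).1)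
    -- density of the span of gK in K
    have hsp : ⊤ ≤ (Submodule.span ℂ (Set.range gK)).topologicalClosure := by
      refine ge_of_eq (Submodule.topologicalClosure_eq_top_iff.2 ?_)
      rw [Submodule.eq_bot_iff]
      intro z hz
      have hzj : ∀ j : ι, (inner ℂ (g j) ((z : H)) : ℂ) = 0 := by
        intro j
        have := ((Submodule.mem_orthogonal _ _).1 hz) (gK j)
          (Submodule.subset_span ⟨j, rfl⟩)
        rw [Submodule.coe_inner] at this
        exact this
      -- z is orthogonal to each atom
      have hzD : ∀ k : ℕ, ∀ y : ↥(N k ⊓ (N (k+1))ᗮ), (inner ℂ (y : H) ((z : H)) : ℂ) = 0 := by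
        intro k
        have hdense : Dense ((Submodule.span ℂ
            (Set.range ((↑) : w k → ↥(N k ⊓ (N (k+1))ᗮ)))) : Set ↥(N k ⊓ (N (k+1))ᗮ)) := by
          rw [dense_iff_closure_eq, ← Submodule.topologicalClosure_coe]
          have hb := (bB k).dense_span
          rw [hbB k] at hb
          rw [hb, Submodule.top_coe]
        have hcont : Continuous fun y : ↥(N k ⊓ (N (k+1))ᗮ) =>
            (inner ℂ ((y : H)) ((z : H)) : ℂ) :=
          (continuous_subtype_val).inner continuous_const
        have hEq : Set.EqOn (fun y : ↥(N k ⊓ (N (k+1))ᗮ) => (inner ℂ ((y : H)) ((z : H)) : ℂ))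
            (fun _ => (0 : ℂ))
            ((Submodule.span ℂ (Set.range ((↑) : w k → ↥(N k ⊓ (N (k+1))ᗮ)))) : Set _) := by
          intro y hy
          simp only
          induction hy using Submodule.span_induction with
          | mem u hu =>
            obtain ⟨su, rfl⟩ := hu
            exact hzj ⟨k, su⟩
          | zero => simp
          | add u v _ _ hu hv => rw [Submodule.coe_add, inner_add_left, hu, hv, add_zero]
          | smul c u _ hu => rw [Submodule.coe_smul, inner_smul_left, hu, mul_zero]
        have := Continuous.ext_on hdense hcont continuous_const hEq
        intro y
        exact congrFun this y
      -- inductively, z ∈ N k for all k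
      have hzN : ∀ k : ℕ, (z : H) ∈ N k := by
        intro k
        induction k with
        | zero => exact (Submodule.mem_inf.1 (SetLike.coe_mem z)).1
        | succ m ih =>
          haveI : CompleteSpace ↥(N (m+1)) := (hNcl (m+1)).completeSpace_coe
          set r := (z : H) - (Submodule.orthogonalProjectionOnto (N (m+1)) (z : H) : H) with hr
          have hrD : r ∈ N m ⊓ (N (m+1))ᗮ := by
            refine Submodule.mem_inf.2 ⟨Submodule.sub_mem _ ih
              (hNmono (Nat.le_succ m) (SetLike.coe_mem _)), ?_⟩
            exact Submodule.sub_starProjection_mem_orthogonal (z : H)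
          have h1 : (inner ℂ r ((z : H)) : ℂ) = 0 := hzD m ⟨r, hrD⟩
          have h2 : (inner ℂ r ((Submodule.orthogonalProjectionOnto (N (m+1)) (z : H) : H)) : ℂ) = 0 :=
            ((Submodule.mem_orthogonal' _ _).1 (Submodule.mem_inf.1 hrD).2) _
              (SetLike.coe_mem _)
          have h3 : (inner ℂ r r : ℂ) = 0 := by
            have : (inner ℂ r r : ℂ) = (inner ℂ r ((z:H)) : ℂ) -
                (inner ℂ r ((Submodule.orthogonalProjectionOnto (N (m+1)) (z : H) : H)) : ℂ) := by
              rw [← inner_sub_right]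
            rw [this, h1, h2, sub_zero]
          have hr0 : r = 0 := inner_self_eq_zero.1 h3
          have : (z : H) = (Submodule.orthogonalProjectionOnto (N (m+1)) (z : H) : H) := by
            rwa [sub_eq_zero] at hr0
          rw [this]; exact SetLike.coe_mem _
      have hzinf : (z : H) ∈ Ninf := Submodule.mem_iInf _ |>.2 hzN
      have hzbot : (inner ℂ ((z:H)) ((z:H)) : ℂ) = 0 :=
        ((Submodule.mem_orthogonal' _ _).1 (Submodule.mem_inf.1 (SetLike.coe_mem z)).2) _ hzinf
      have : (z : H) = 0 := inner_self_eq_zero.1 hzbot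
      exact Subtype.ext this
    set bK : HilbertBasis ι ℂ ↥K := HilbertBasis.mk hONgK hsp with hbK
    have hbKcoe : ⇑bK = gK := HilbertBasis.coe_mk _ _
    have hrepr : ∀ (x : ↥K) (j : ι), bK.repr x j = (inner ℂ (g j) ((x : H)) : ℂ) := by
      intro x j
      have h1 : bK.repr x j = (inner ℂ (bK j) x : ℂ) := bK.repr_apply_apply x j
      rw [hbKcoe] at h1
      rw [h1, Submodule.coe_inner]
    -- ## the maps ψ i
    set ψ : Fin n → ι → ℕ := fun i j => (i : ℕ) + n * (1 + Nat.pair j.1 (enc j)) with hψ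
    have hψge : ∀ (i : Fin n) (j : ι), j.1 + 1 ≤ ψ i j := by
      intro i j
      have h1 : j.1 ≤ Nat.pair j.1 (enc j) := Nat.left_le_pair _ _
      have hn : 0 < n := i.pos
      calc j.1 + 1 ≤ 1 + Nat.pair j.1 (enc j) := by omega
        _ ≤ n * (1 + Nat.pair j.1 (enc j)) := Nat.le_mul_of_pos_left _ hn
        _ ≤ ψ i j := Nat.le_add_left _ _
    have hψ1 : ∀ (i : Fin n) (j : ι), 1 ≤ ψ i j := fun i j => le_trans (by omega) (hψge i j)
    have hψinj : ∀ i : Fin n, Function.Injective (ψ i) := by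
      intro i j j' hjj
      simp only [hψ] at hjj
      have hn : 0 < n := i.pos
      have h1 : n * (1 + Nat.pair j.1 (enc j)) = n * (1 + Nat.pair j'.1 (enc j')) := by omega
      have h2 : 1 + Nat.pair j.1 (enc j) = 1 + Nat.pair j'.1 (enc j') :=
        Nat.eq_of_mul_eq_mul_left hn h1
      have h3 : Nat.pair j.1 (enc j) = Nat.pair j'.1 (enc j') := by omega
      exact henc (Nat.pair_eq_pair.1 h3).2
    have hψdisj : ∀ (i i' : Fin n), i ≠ i' → ∀ (j j' : ι), ψ i j ≠ ψ i' j' := by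
      intro i i' hii j j' hcon
      apply hii
      have h1 := congrArg (· % n) hcon
      simp only [hψ, Nat.add_mul_mod_self_left, Nat.mod_eq_of_lt i.isLt,
        Nat.mod_eq_of_lt i'.isLt] at h1
      exact Fin.ext h1
    -- ## the isometries A i
    have hf : ∀ i : Fin n, Orthonormal ℂ (e ∘ ψ i) := fun i => he.comp (ψ i) (hψinj i)
    set A : Fin n → (↥K →ₗᵢ[ℂ] H) := fun i =>
      ((hf i).orthogonalFamily.linearIsometry).comp bK.repr.toLinearIsometry with hA
    have hExp : ∀ (i : Fin n) (x : ↥K),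
        HasSum (fun j : ι => bK.repr x j • e (ψ i j)) (A i x) := by
      intro i x
      have h1 := (hf i).orthogonalFamily.hasSum_linearIsometry (bK.repr x)
      have h2 : ∀ j : ι, (LinearIsometry.toSpanSingleton ℂ H ((hf i).1 j)) (bK.repr x j)
          = bK.repr x j • e (ψ i j) := fun j => LinearIsometry.toSpanSingleton_apply _ _
      simp [h2] at h1; exact h1
    have hInner0 : ∀ (i : Fin n) (x : ↥K) (z : H),
        (∀ j : ι, (inner ℂ z (e (ψ i j)) : ℂ) = 0) → (inner ℂ z (A i x) : ℂ) = 0 := by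
      intro i x z hzj
      have h1 := (hExp i x).mapL (innerSL ℂ z)
      have h2 : (fun j : ι => (innerSL ℂ z) (bK.repr x j • e (ψ i j))) = fun _ => (0:ℂ) := by
        funext j
        rw [innerSL_apply_apply, inner_smul_right, hzj j, mul_zero]
      rw [h2] at h1
      have := h1.unique hasSum_zero
      rwa [innerSL_apply_apply] at this
    have hMem : ∀ (i : Fin n) (x : ↥K) (C : Submodule ℂ H), IsClosed ((C : Set H)) →
        (∀ j : ι, bK.repr x j ≠ 0 → e (ψ i j) ∈ C) → A i x ∈ C := by
      intro i x C hCcl hCj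
      haveI : Nonempty (Finset ι) := ⟨∅⟩
      haveI : (Filter.atTop : Filter (Finset ι)).NeBot := Filter.atTop_neBot
      refine hCcl.mem_of_tendsto (hExp i x) (Filter.Eventually.of_forall fun s => ?_)
      rw [SetLike.mem_coe]
      refine Submodule.sum_mem _ fun j _ => ?_
      by_cases h0 : bK.repr x j = 0
      · rw [h0, zero_smul]; exact Submodule.zero_mem _
      · exact Submodule.smul_mem _ _ (hCj j h0)
    have hdepth : ∀ (k : ℕ) (x : ↥K), (x : H) ∈ N k → ∀ j : ι, j.1 < k →
        bK.repr x j = 0 := by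
      intro k x hx j hj
      rw [hrepr]
      exact ((Submodule.mem_orthogonal' _ _).1 (hgmem j).2) _ (hNmono (by omega) hx)
    -- ## the tuple of operators
    set opA : Fin n → (H →L[ℂ] H) := fun i =>
      ((A i).toContinuousLinearMap).comp (Submodule.orthogonalProjectionOnto K) with hopA
    have hopAapp : ∀ (i : Fin n) (x : H), opA i x = A i (Submodule.orthogonalProjectionOnto K x) :=
      fun i x => rfl
    have hPK : ∀ x : H, x ∈ N 0 →
        ((Submodule.orthogonalProjectionOnto K x : H)) = x - (Submodule.orthogonalProjectionOnto Ninf x : H) := by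
      intro x hx
      refine Submodule.eq_starProjection_of_mem_orthogonal ?_ ?_
      · refine Submodule.mem_inf.2 ⟨Submodule.sub_mem _ hx
          (hNinfle 0 (SetLike.coe_mem _)), Submodule.sub_starProjection_mem_orthogonal x⟩
      · have hh : x - (x - (Submodule.orthogonalProjectionOnto Ninf x : H))
            = (Submodule.orthogonalProjectionOnto Ninf x : H) := by abel
        rw [hh]
        exact hNinfKbot (SetLike.coe_mem _)
    have hopmem : ∀ i : Fin n, opA i ∈ nestAlgebra 𝒩 := by
      intro i
      show ∀ M ∈ 𝒩, ∀ x ∈ M, opA i x ∈ M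
      intro M hM x hx
      by_cases hall : ∀ k, M ≤ N k
      · have hxinf : x ∈ Ninf := Submodule.mem_iInf _ |>.2 fun k => hall k hx
        have hP0 : Submodule.orthogonalProjectionOnto K x = 0 :=
          Submodule.orthogonalProjectionOnto_apply_of_mem_orthogonal (hNinfKbot hxinf)
        rw [hopAapp, hP0, map_zero]
        exact Submodule.zero_mem _
      · push_neg at hall
        have hex : ∃ k, ¬ M ≤ N k := hall
        have hk₀ : ¬ M ≤ N (Nat.find hex) := Nat.find_spec hex
        have hlt : ∀ m, m < Nat.find hex → M ≤ N m := fun m hm =>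
          not_not.1 (Nat.find_min hex hm)
        have hNk₀M : N (Nat.find hex) ≤ M := by
          rcases h𝒩.isChain.total (hmem (Nat.find hex)) hM with h | h
          · exact h
          · exact absurd h hk₀
        have hCM : (Submodule.span ℂ (e '' {m | Nat.find hex ≤ m})).topologicalClosure ≤ M := by
          apply Submodule.topologicalClosure_minimal
          · rw [Submodule.span_le]
            rintro _ ⟨m, hm, rfl⟩
            exact hNk₀M (hNmono hm (heD1 m))
          · exact h𝒩.isClosed M hM
        refine hCM ?_
        rw [hopAapp]
        apply hMem
        · exact Submodule.isClosed_topologicalClosure _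
        · intro j hj0
          apply Submodule.le_topologicalClosure
          apply Submodule.subset_span
          refine ⟨ψ i j, ?_, rfl⟩
          show Nat.find hex ≤ ψ i j
          rcases Nat.eq_zero_or_pos (Nat.find hex) with h0 | hpos
          · omega
          · have hx0 : x ∈ N 0 := hlt 0 hpos hx
            have hxk : x ∈ N (Nat.find hex - 1) := hlt _ (by omega) hx
            have hPmem : ((Submodule.orthogonalProjectionOnto K x : H)) ∈ N (Nat.find hex - 1) := by
              rw [hPK x hx0]
              exact Submodule.sub_mem _ hxk (hNinfle _ (SetLike.coe_mem _))
            by_contra hcon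
            exact hj0 (hdepth (Nat.find hex - 1) (Submodule.orthogonalProjectionOnto K x) hPmem j
              (by have := hψge i j; omega))
    -- ## the perturbation argument
    set ε : ℝ := (2 * ((n : ℝ) + 1))⁻¹ with hεdef
    have hεpos : 0 < ε := by positivity
    set aT : Fin n → ↥(nestAlgebra 𝒩) := fun i => ⟨opA i, hopmem i⟩ with haT
    obtain ⟨a', ha'ball, ha'Rg⟩ := Metric.dense_iff.1 hDense aT ε hεpos
    have hclose : ∀ i : Fin n, ‖((a' i : H →L[ℂ] H)) - opA i‖ < ε := by
      intro i
      have h1 : dist (a' i) (aT i) < ε := by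
        have := (Metric.mem_ball.1 ha'ball)
        exact (dist_pi_lt_iff hεpos).1 this i
      rw [Subtype.dist_eq, dist_eq_norm] at h1
      exact h1
    obtain ⟨bb, hbb⟩ := ha'Rg
    have hsum : ∑ i, ((a' i : H →L[ℂ] H) * (bb i : H →L[ℂ] H)) = (1 : H →L[ℂ] H) := by
      exact_mod_cast congrArg Subtype.val hbb
    have hsumapp : ∑ i, (a' i : H →L[ℂ] H) ((bb i : H →L[ℂ] H) (e 0)) = e 0 := by
      have := congrArg (fun T : H →L[ℂ] H => T (e 0)) hsum
      simpa [ContinuousLinearMap.sum_apply, ContinuousLinearMap.mul_apply] using this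
    have hmemA : ∀ (T : ↥(nestAlgebra 𝒩)) (M : Submodule ℂ H), M ∈ 𝒩 →
        ∀ x ∈ M, (T : H →L[ℂ] H) x ∈ M := fun T M hM x hx => T.2 M hM x hx
    set ww : Fin n → H := fun i => (bb i : H →L[ℂ] H) (e 0) with hww
    have hwN0 : ∀ i, ww i ∈ N 0 := fun i => hmemA (bb i) (N 0) (hmem 0) (e 0) (heD1 0)
    set uu : Fin n → H := fun i => (Submodule.orthogonalProjectionOnto Ninf (ww i) : H) with huu
    have huuinf : ∀ i, uu i ∈ Ninf := fun i => SetLike.coe_mem _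
    set vv : Fin n → H := fun i => ww i - uu i with hvv
    have hvK : ∀ i, vv i ∈ K := by
      intro i
      refine Submodule.mem_inf.2 ⟨Submodule.sub_mem _ (hwN0 i)
        (hNinfle 0 (huuinf i)), Submodule.sub_starProjection_mem_orthogonal (ww i)⟩
    set xx : Fin n → ↥K := fun i => ⟨vv i, hvK i⟩ with hxx
    set δ : Fin n → (H →L[ℂ] H) := fun i => (a' i : H →L[ℂ] H) - opA i with hδ
    set U : H := ∑ i, (a' i : H →L[ℂ] H) (uu i) with hU
    set V : H := ∑ i, A i (xx i) with hV
    set W : H := ∑ i, δ i (vv i) with hW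
    have hsplit : e 0 = U + V + W := by
      rw [hU, hV, hW, ← Finset.sum_add_distrib, ← Finset.sum_add_distrib, ← hsumapp]
      refine Finset.sum_congr rfl fun i _ => ?_
      have h1 : (bb i : H →L[ℂ] H) (e 0) = uu i + vv i := by
        rw [hvv]; simp [hww]
      rw [h1, map_add]
      have h2 : (a' i : H →L[ℂ] H) (vv i) = A i (xx i) + δ i (vv i) := by
        rw [hδ]
        simp only [ContinuousLinearMap.sub_apply]
        have h3 : opA i (vv i) = A i (xx i) := by
          rw [hopAapp]
          congr 1
          have : ((xx i : H)) = vv i := rfl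
          rw [← this, Submodule.orthogonalProjectionOnto_mem_subspace_eq_self]
        rw [h3]; abel
      rw [h2]; abel
    -- inner product facts
    have hUinf : U ∈ Ninf := by
      rw [hU]
      refine Submodule.sum_mem _ fun i _ => ?_
      refine Submodule.mem_iInf _ |>.2 fun k => ?_
      exact hmemA (a' i) (N k) (hmem k) (uu i) (hNinfle k (huuinf i))
    have he0N1 : ∀ y : H, y ∈ N 1 → (inner ℂ (e 0) y : ℂ) = 0 := fun y hy =>
      ((Submodule.mem_orthogonal' _ _).1 (heD2 0)) y hy
    have he0U : (inner ℂ (e 0) U : ℂ) = 0 := he0N1 U (hNinfle 1 hUinf)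
    have he0Ai : ∀ i : Fin n, (inner ℂ (e 0) (A i (xx i)) : ℂ) = 0 := by
      intro i
      refine hInner0 i (xx i) (e 0) fun j => ?_
      exact he.2 (by have := hψ1 i j; omega)
    have he0V : (inner ℂ (e 0) V : ℂ) = 0 := by
      rw [hV, inner_sum]
      exact Finset.sum_eq_zero fun i _ => he0Ai i
    have he0W : (inner ℂ (e 0) W : ℂ) = 1 := by
      have h1 : (inner ℂ (e 0) (e 0) : ℂ) = 1 := by
        rw [inner_self_eq_norm_sq_to_K, heno 0]; norm_num
      have h2 := congrArg (fun y => (inner ℂ (e 0) y : ℂ)) hsplit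
      simp only [inner_add_right] at h2
      rw [h1, he0U, he0V] at h2
      linear_combination -h2
    set s : ℝ := ∑ i, ‖vv i‖ with hs
    have hWnorm : ‖W‖ ≤ ε * s := by
      rw [hW, hs]
      calc ‖∑ i, δ i (vv i)‖ ≤ ∑ i, ‖δ i (vv i)‖ := norm_sum_le _ _
        _ ≤ ∑ i, ε * ‖vv i‖ := by
          refine Finset.sum_le_sum fun i _ => ?_
          calc ‖δ i (vv i)‖ ≤ ‖δ i‖ * ‖vv i‖ := (δ i).le_opNorm _
            _ ≤ ε * ‖vv i‖ := by
              have := hclose i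
              have h2 : ‖δ i‖ ≤ ε := by rw [hδ]; exact this.le
              exact mul_le_mul_of_nonneg_right h2 (norm_nonneg _)
        _ = ε * s := by rw [hs, Finset.mul_sum]
    have h1s : 1 ≤ ε * s := by
      have h1 : (1 : ℝ) = ‖(inner ℂ (e 0) W : ℂ)‖ := by rw [he0W]; simp
      calc (1:ℝ) = ‖(inner ℂ (e 0) W : ℂ)‖ := h1
        _ ≤ ‖e 0‖ * ‖W‖ := norm_inner_le_norm _ _
        _ = ‖W‖ := by rw [heno 0, one_mul]
        _ ≤ ε * s := hWnorm
    have hspos : 0 < s := by nlinarith [h1s, hεpos, mul_pos hεpos hεpos]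
    -- the lower bound on ∑ ‖vv i‖²
    have hcross : ∀ i i' : Fin n, i ≠ i' →
        (inner ℂ (A i (xx i)) (A i' (xx i')) : ℂ) = 0 := by
      intro i i' hii
      refine hInner0 i' (xx i') (A i (xx i)) fun j' => ?_
      rw [inner_eq_zero_symm]
      refine hInner0 i (xx i) (e (ψ i' j')) fun j => ?_
      exact he.2 (hψdisj i' i (Ne.symm hii) j' j)
    have hVnormsq : ‖V‖ ^ 2 = ∑ i, ‖vv i‖ ^ 2 := by
      rw [hV, aux_norm_sum_sq _ hcross]
      refine Finset.sum_congr rfl fun i _ => ?_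
      rw [(A i).norm_map]
      congr 1
    have hVU : (inner ℂ V U : ℂ) = 0 := by
      rw [hV, sum_inner]
      refine Finset.sum_eq_zero fun i _ => ?_
      rw [inner_eq_zero_symm]
      refine hInner0 i (xx i) U fun j => ?_
      exact ((Submodule.mem_orthogonal _ _).1 (heD2 (ψ i j))) U (hNinfle _ hUinf)
    have hVe0 : (inner ℂ V (e 0) : ℂ) = 0 := inner_eq_zero_symm.1 he0V
    have hVW : ‖V‖ ^ 2 ≤ ‖V‖ * (ε * s) := by
      have hVeq : V = e 0 - U - W := by rw [hsplit]; abel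
      have h1 : (inner ℂ V V : ℂ) = - (inner ℂ V W : ℂ) := by
        calc (inner ℂ V V : ℂ) = (inner ℂ V (e 0 - U - W) : ℂ) := by rw [← hVeq]
          _ = (inner ℂ V (e 0) : ℂ) - (inner ℂ V U : ℂ) - (inner ℂ V W : ℂ) := by
            rw [inner_sub_right, inner_sub_right]
          _ = - (inner ℂ V W : ℂ) := by rw [hVe0, hVU]; ring
      have h2 : ‖V‖ ^ 2 = - ((inner ℂ V W : ℂ)).re := by
        rw [← inner_self_eq_norm_sq (𝕜 := ℂ), h1]
        simp
      have h3 : ‖(inner ℂ V W : ℂ)‖ ≤ ‖V‖ * ‖W‖ := norm_inner_le_norm _ _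
      have h4 : |((inner ℂ V W : ℂ)).re| ≤ ‖(inner ℂ V W : ℂ)‖ := by
        exact Complex.abs_re_le_norm _
      have h5 : ‖V‖ * ‖W‖ ≤ ‖V‖ * (ε * s) :=
        mul_le_mul_of_nonneg_left hWnorm (norm_nonneg _)
      calc ‖V‖ ^ 2 = - ((inner ℂ V W : ℂ)).re := h2
        _ ≤ |((inner ℂ V W : ℂ)).re| := neg_le_abs _
        _ ≤ ‖(inner ℂ V W : ℂ)‖ := h4
        _ ≤ ‖V‖ * ‖W‖ := h3
        _ ≤ ‖V‖ * (ε * s) := h5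
    have hVle : ‖V‖ ≤ ε * s := by
      rcases eq_or_lt_of_le (norm_nonneg V) with h0 | h0
      · rw [← h0]; nlinarith
      · nlinarith
    have hs2 : s ^ 2 ≤ (n : ℝ) * ∑ i, ‖vv i‖ ^ 2 := by
      have := sq_sum_le_card_mul_sum_sq (s := (Finset.univ : Finset (Fin n)))
        (f := fun i => ‖vv i‖)
      simpa [hs] using this
    have hfin : s ^ 2 ≤ (n : ℝ) * (ε * s) ^ 2 := by
      calc s ^ 2 ≤ (n : ℝ) * ∑ i, ‖vv i‖ ^ 2 := hs2
        _ = (n : ℝ) * ‖V‖ ^ 2 := by rw [hVnormsq]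
        _ ≤ (n : ℝ) * (ε * s) ^ 2 := by
          refine mul_le_mul_of_nonneg_left ?_ (Nat.cast_nonneg n)
          exact pow_le_pow_left₀ (norm_nonneg V) hVle 2
    exact aux_final n ε s hεdef h1s hfin
  -- ## conclude
  have hset : {N' : ℕ∞ | ∃ n : ℕ, N' = n ∧ Dense (Rg (nestAlgebra 𝒩) n)} = ∅ := by
    ext x
    simp only [Set.mem_setOf_eq, Set.mem_empty_iff_false, iff_false]
    rintro ⟨n, rfl, hd⟩
    exact key n hd
  have hrtsr : rtsr (↥(nestAlgebra 𝒩)) =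
      sInf {N' : ℕ∞ | ∃ n : ℕ, N' = n ∧ Dense (Rg (↥(nestAlgebra 𝒩)) n)} := rfl
  rw [hrtsr, hset, sInf_empty]
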